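/- Let n be a positive integer, let i be an integer with 1 ≤ i ≤ ⌈n/2⌉, and let t be a positive integer with t ≤ n²/4 and t ≡ n − i (mod 2). Let A be the number of walks of length t started at i with w(t) = n and MAX(w) = n, let F be the number of walks of length t started at i with MIN(w) < 1, and let A' be the number of walks of length t started at i with w(t) = n, MAX(w) = n, and MIN(w) < 1. Then A · F ≥ 2^t · A'. (Equivalently, Pr_i^t[w(t) = n and MAX(w) = n] ≥ Pr_i^t[w(t) = n and MAX(w) = n | MIN(w) < 1] whenever the conditional probability is defined.) -/

import Mathlib

/-- A 1D walk of length `t` started at `i`: a function on `{0,…,t}` starting at `i`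
whose consecutive values differ by exactly `1`. -/
def IsWalk (i : ℤ) (t : ℕ) (w : Fin (t + 1) → ℤ) : Prop :=
  w 0 = i ∧ ∀ j : Fin t, |w j.succ - w j.castSucc| = 1

/-- The number of walks of length `t` started at `i` satisfying `P`. -/
noncomputable def walkCount (i : ℤ) (t : ℕ) (P : (Fin (t + 1) → ℤ) → Prop) : ℕ :=
  {w : Fin (t + 1) → ℤ | IsWalk i t w ∧ P w}.ncard

/-- `Pr_i^t[P]`: the number of walks of length `t` started at `i` satisfying `P`,
divided by `2 ^ t`. -/
noncomputable def walkProb (i : ℤ) (t : ℕ) (P : (Fin (t + 1) → ℤ) → Prop) : ℝ :=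
  (walkCount i t P : ℝ) / 2 ^ t

/-- `w(t) = n`. -/
def endsAt {t : ℕ} (n : ℤ) (w : Fin (t + 1) → ℤ) : Prop := w (Fin.last t) = n

/-- `MAX(w) = n`. -/
def maxEq {t : ℕ} (n : ℤ) (w : Fin (t + 1) → ℤ) : Prop :=
  (∀ j, w j ≤ n) ∧ ∃ j, w j = n

/-- `MIN(w) ≥ m`. -/
def minGE {t : ℕ} (m : ℤ) (w : Fin (t + 1) → ℤ) : Prop := ∀ j, m ≤ w j

open Finset

namespace WalkAux

def stp (b : Bool) : ℤ := if b then 1 else -1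

def pos (i : ℤ) (η : ℕ → Bool) (j : ℕ) : ℤ := i + ∑ l ∈ Finset.range j, stp (η l)

@[simp] lemma pos_zero (i η) : pos i η 0 = i := by simp [pos]

lemma pos_succ (i η j) : pos i η (j+1) = pos i η j + stp (η j) := by
  simp [pos, Finset.sum_range_succ]; ring

lemma stp_le (b) : stp b ≤ 1 := by cases b <;> simp [stp]
lemma le_stp (b) : -1 ≤ stp b := by cases b <;> simp [stp]
lemma abs_stp (b) : |stp b| = 1 := by cases b <;> simp [stp]
lemma stp_inj : Function.Injective stp := by
  intro a b h; cases a <;> cases b <;> simp [stp] at h ⊢ <;> omega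

lemma pos_congr {i η η' : _} {j : ℕ} (h : ∀ l < j, η l = η' l) : pos i η j = pos i η' j := by
  unfold pos
  congr 1
  exact Finset.sum_congr rfl (fun l hl => by rw [h l (Finset.mem_range.mp hl)])

/-- extend a finite step sequence -/
def ext {t : ℕ} (ε : Fin t → Bool) : ℕ → Bool := fun l => if h : l < t then ε ⟨l, h⟩ else true

lemma ext_lt {t : ℕ} (ε : Fin t → Bool) {l : ℕ} (h : l < t) : ext ε l = ε ⟨l, h⟩ := by
  simp [ext, h]

def toWalk (i : ℤ) (t : ℕ) (ε : Fin t → Bool) : Fin (t+1) → ℤ :=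
  fun j => pos i (ext ε) j

lemma toWalk_succ (i t ε) (j : ℕ) (hj : j < t) :
    toWalk i t ε ⟨j+1, by omega⟩ = toWalk i t ε ⟨j, by omega⟩ + stp (ε ⟨j, hj⟩) := by
  simp only [toWalk, pos_succ]
  rw [ext_lt ε hj]

lemma isWalk_toWalk (i t ε) : IsWalk i t (toWalk i t ε) := by
  constructor
  · simp [toWalk]
  · intro j
    have h1 : (j.succ : Fin (t+1)) = ⟨(j : ℕ)+1, by omega⟩ := rfl
    have h2 : (j.castSucc : Fin (t+1)) = ⟨(j : ℕ), by omega⟩ := rfl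
    rw [h1, h2, toWalk_succ i t ε j j.2]
    simp [abs_stp]

lemma toWalk_injective (i t) : Function.Injective (toWalk i t) := by
  intro ε ε' h
  funext l
  have h1 := congrFun h ⟨(l : ℕ)+1, by omega⟩
  have h2 := congrFun h ⟨(l : ℕ), by omega⟩
  rw [toWalk_succ i t ε l l.2, toWalk_succ i t ε' l l.2, h2] at h1
  have := stp_inj (add_left_cancel h1)
  simpa using this

lemma toWalk_surj {i t} {w : Fin (t+1) → ℤ} (hw : IsWalk i t w) :
    ∃ ε, toWalk i t ε = w := by
  refine ⟨fun j => decide (w j.succ = w j.castSucc + 1), ?_⟩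
  funext l
  obtain ⟨j, hj⟩ := l
  induction j with
  | zero => simpa [toWalk] using hw.1.symm
  | succ m ih =>
      have hm : m < t := by omega
      have hml : (⟨m+1, hj⟩ : Fin (t+1)) = (⟨m, hm⟩ : Fin t).succ := rfl
      have hmc : (⟨m, by omega⟩ : Fin (t+1)) = (⟨m, hm⟩ : Fin t).castSucc := rfl
      rw [toWalk_succ i t _ m hm, ih (by omega)]
      have habs := hw.2 ⟨m, hm⟩
      rw [hml, hmc]
      rw [abs_eq (by norm_num)] at habs
      rcases habs with h1 | h1
      · have hd : w (⟨m, hm⟩ : Fin t).succ = w (⟨m, hm⟩ : Fin t).castSucc + 1 := by omega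
        rw [hd]; simp [stp]
      · have hne : (decide (w (⟨m, hm⟩ : Fin t).succ = w (⟨m, hm⟩ : Fin t).castSucc + 1)) = false := by
          rw [decide_eq_false_iff_not]; omega
        rw [hne]; simp only [stp, if_false, Bool.false_eq_true]; omega

open Classical in
lemma walkCount_eq (i : ℤ) (t : ℕ) (P : (Fin (t+1) → ℤ) → Prop) :
    walkCount i t P = (Finset.univ.filter (fun ε : Fin t → Bool => P (toWalk i t ε))).card := by
  classical
  have hset : {w : Fin (t + 1) → ℤ | IsWalk i t w ∧ P w} =
      toWalk i t '' {ε | P (toWalk i t ε)} := by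
    ext w
    constructor
    · rintro ⟨hw, hP⟩
      obtain ⟨ε, rfl⟩ := toWalk_surj hw
      exact ⟨ε, hP, rfl⟩
    · rintro ⟨ε, hP, rfl⟩
      exact ⟨isWalk_toWalk i t ε, hP⟩
  rw [walkCount, hset, Set.ncard_image_of_injective _ (toWalk_injective i t)]
  rw [Set.ncard_eq_toFinset_card']
  congr 1
  ext ε
  simp


/-! ### endpoint counts -/

lemma pos_ext_end {m : ℕ} (i : ℤ) (ε : Fin m → Bool) :
    pos i (ext ε) m = i + 2 * ((Finset.univ.filter fun l => ε l = true).card : ℤ) - m := by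
  have h1 : pos i (ext ε) m = i + ∑ l : Fin m, stp (ε l) := by
    unfold pos
    congr 1
    rw [Finset.sum_range fun l => stp (ext ε l)]
    exact Finset.sum_congr rfl fun l _ => by rw [ext_lt ε l.2]
  rw [h1]
  have h2 : ∀ b, stp b = 2 * (if b = true then (1:ℤ) else 0) - 1 := by
    intro b; cases b <;> simp [stp]
  rw [Finset.sum_congr rfl fun l _ => h2 (ε l), Finset.sum_sub_distrib, ← Finset.mul_sum,
    Finset.sum_boole]
  simp
  ring

lemma card_filter_eq (m k : ℕ) :
    (Finset.univ.filter fun ε : Fin m → Bool => (Finset.univ.filter fun l => ε l = true).card = k).card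
      = Nat.choose m k := by
  classical
  have hpc : (Finset.powersetCard k (Finset.univ : Finset (Fin m))).card = Nat.choose m k := by
    simp [Finset.card_powersetCard]
  rw [← hpc]
  apply Finset.card_bij (fun ε _ => Finset.univ.filter fun l => ε l = true)
  · intro ε hε
    simp only [Finset.mem_filter, Finset.mem_univ, true_and] at hε
    simp [Finset.mem_powersetCard, hε]
  · intro ε hε ε' hε' h
    funext l
    have := Finset.ext_iff.mp h l
    simp only [Finset.mem_filter, Finset.mem_univ, true_and] at this
    cases hl : ε l <;> cases hl' : ε' l <;> simp [hl, hl'] at this ⊢ <;> tauto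
  · intro S hS
    simp only [Finset.mem_powersetCard] at hS
    refine ⟨fun l => decide (l ∈ S), ?_, ?_⟩
    · simp only [Finset.mem_filter, Finset.mem_univ, true_and]
      rw [← hS.2]; congr 1; ext l; simp
    · ext l; simp

/-- number of `ε : Fin m → Bool` whose walk from `i` ends at `y` -/
def endCnt (i : ℤ) (m : ℕ) (y : ℤ) : ℕ :=
  (Finset.univ.filter fun ε : Fin m → Bool => pos i (ext ε) m = y).card

lemma endCnt_eq_choose (i : ℤ) (m k : ℕ) (hk : k ≤ m) (y : ℤ) (hy : y = i + 2 * k - m) :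
    endCnt i m y = Nat.choose m k := by
  rw [endCnt, ← card_filter_eq m k]
  congr 1
  ext ε
  simp only [Finset.mem_filter, Finset.mem_univ, true_and]
  rw [pos_ext_end, hy]
  constructor
  · intro h
    have : ((Finset.univ.filter fun l => ε l = true).card : ℤ) = k := by omega
    exact_mod_cast this
  · intro h; rw [h]

lemma endCnt_eq_zero (i : ℤ) (m : ℕ) (y : ℤ) (h : ∀ k : ℕ, k ≤ m → y ≠ i + 2 * k - m) :
    endCnt i m y = 0 := by
  rw [endCnt, Finset.card_eq_zero]
  ext ε
  simp only [Finset.mem_filter, Finset.mem_univ, true_and, Finset.notMem_empty, iff_false]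
  intro hc
  rw [pos_ext_end] at hc
  exact h (Finset.univ.filter fun l => ε l = true).card
    (le_trans (Finset.card_filter_le _ _) (by simp)) hc.symm

/-! ### IVT, reflection -/

lemma exists_hit {i : ℤ} {η : ℕ → Bool} {v : ℤ} (h0 : i ≤ v) :
    ∀ m : ℕ, v ≤ pos i η m → ∃ j ≤ m, pos i η j = v := by
  intro m
  induction m with
  | zero => intro h; exact ⟨0, le_refl 0, le_antisymm (by simpa using h0) (by simpa using h)⟩
  | succ m ih =>
      intro h
      by_cases hc : v ≤ pos i η m
      · obtain ⟨j, hj, hjv⟩ := ih hc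
        exact ⟨j, by omega, hjv⟩
      · refine ⟨m + 1, le_refl _, ?_⟩
        have := stp_le (η m)
        have hps := pos_succ i η m
        omega

def reflAfter (s : ℕ) (η : ℕ → Bool) : ℕ → Bool := fun l => if l < s then η l else !(η l)

lemma stp_not (b : Bool) : stp (!b) = - stp b := by cases b <;> simp [stp]

lemma pos_reflAfter_le (i : ℤ) (η : ℕ → Bool) (s j : ℕ) (hj : j ≤ s) :
    pos i (reflAfter s η) j = pos i η j :=
  pos_congr (fun l hl => by simp [reflAfter, show l < s by omega])

lemma pos_reflAfter_ge (i : ℤ) (η : ℕ → Bool) (s j : ℕ) (hj : s ≤ j) :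
    pos i (reflAfter s η) j = 2 * pos i η s - pos i η j := by
  induction j, hj using Nat.le_induction with
  | base => rw [pos_reflAfter_le i η s s (le_refl s)]; ring
  | succ j hj ih =>
      rw [pos_succ, pos_succ, ih]
      have : reflAfter s η j = !(η j) := by simp [reflAfter, show ¬ (j < s) by omega]
      rw [this, stp_not]
      ring

/-- reflect after the first hit of level `v` -/
noncomputable def reflect (i v : ℤ) {m : ℕ} (ε : Fin m → Bool) : Fin m → Bool := by
  classical
  exact if h : ∃ j, pos i (ext ε) j = v then fun l => reflAfter (Nat.find h) (ext ε) l else ε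

lemma ext_reflect (i v : ℤ) {m : ℕ} (ε : Fin m → Bool) (h : ∃ j, pos i (ext ε) j = v)
    {l : ℕ} (hl : l < m) :
    ext (reflect i v ε) l = reflAfter (Nat.find h) (ext ε) l := by
  classical
  rw [ext_lt _ hl, reflect]
  simp only [h, dif_pos]

lemma pos_reflect (i v : ℤ) {m : ℕ} (ε : Fin m → Bool) (h : ∃ j, pos i (ext ε) j = v)
    {j : ℕ} (hj : j ≤ m) :
    pos i (ext (reflect i v ε)) j = pos i (reflAfter (Nat.find h) (ext ε)) j :=
  pos_congr (fun l hl => ext_reflect i v ε h (by omega))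

lemma reflect_spec (i v : ℤ) {m : ℕ} (ε : Fin m → Bool)
    (hhit : ∃ j, j ≤ m ∧ pos i (ext ε) j = v) :
    (pos i (ext (reflect i v ε)) m = 2 * v - pos i (ext ε) m) ∧
    (∃ j, j ≤ m ∧ pos i (ext (reflect i v ε)) j = v) ∧
    reflect i v (reflect i v ε) = ε := by
  classical
  obtain ⟨j₁, hj₁m, hj₁⟩ := hhit
  have h : ∃ j, pos i (ext ε) j = v := ⟨j₁, hj₁⟩
  set s₀ := Nat.find h with hs₀
  have hs₀m : s₀ ≤ m := le_trans (Nat.find_min' h hj₁) hj₁m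
  have hposs₀ : pos i (ext ε) s₀ = v := Nat.find_spec h
  have hend : pos i (ext (reflect i v ε)) m = 2 * v - pos i (ext ε) m := by
    rw [pos_reflect i v ε h (le_refl m), pos_reflAfter_ge i _ s₀ m hs₀m, hposs₀]
  have hhit' : pos i (ext (reflect i v ε)) s₀ = v := by
    rw [pos_reflect i v ε h hs₀m, pos_reflAfter_le i _ s₀ s₀ (le_refl s₀), hposs₀]
  refine ⟨hend, ⟨s₀, hs₀m, hhit'⟩, ?_⟩
  have h' : ∃ j, pos i (ext (reflect i v ε)) j = v := ⟨s₀, hhit'⟩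
  have hfind' : Nat.find h' = s₀ := by
    apply le_antisymm (Nat.find_min' h' hhit')
    by_contra hlt
    push_neg at hlt
    have hsp := Nat.find_spec h'
    set j₂ := Nat.find h' with hj₂
    have hj₂m : j₂ ≤ m := by omega
    have : pos i (ext (reflect i v ε)) j₂ = pos i (ext ε) j₂ := by
      rw [pos_reflect i v ε h hj₂m, pos_reflAfter_le i _ s₀ j₂ (by omega)]
    rw [this] at hsp
    exact Nat.find_min h hlt hsp
  funext l
  have hl : (l : ℕ) < m := l.2
  have houter : reflect i v (reflect i v ε) l
      = reflAfter (Nat.find h') (ext (reflect i v ε)) l := by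
    rw [reflect]
    simp only [h', dif_pos]
  rw [houter, hfind']
  have hinner : ext (reflect i v ε) (l : ℕ) = reflAfter s₀ (ext ε) (l : ℕ) :=
    ext_reflect i v ε h hl
  by_cases hc : (l : ℕ) < s₀
  · simp only [reflAfter, if_pos hc, hinner, ext_lt ε hl]
  · simp only [reflAfter, if_neg hc, hinner, Bool.not_not, ext_lt ε hl]

lemma card_hits (i : ℤ) (m : ℕ) (y c : ℤ) (hi : i ≤ c) (hy : y ≤ c) :
    ((Finset.univ : Finset (Fin m → Bool)).filter
        (fun ε => pos i (ext ε) m = y ∧ ∃ j, j ≤ m ∧ c + 1 ≤ pos i (ext ε) j)).card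
    = ((Finset.univ : Finset (Fin m → Bool)).filter
        (fun ε => pos i (ext ε) m = 2 * (c + 1) - y)).card := by
  classical
  have hhit1 : ∀ ε : Fin m → Bool, (∃ j, j ≤ m ∧ c + 1 ≤ pos i (ext ε) j) →
      ∃ j, j ≤ m ∧ pos i (ext ε) j = c + 1 := by
    rintro ε ⟨j, hjm, hj⟩
    obtain ⟨j', hj', hj'v⟩ := exists_hit (by omega : i ≤ c + 1) j hj
    exact ⟨j', by omega, hj'v⟩
  have hhit2 : ∀ ε : Fin m → Bool, pos i (ext ε) m = 2 * (c + 1) - y →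
      ∃ j, j ≤ m ∧ pos i (ext ε) j = c + 1 := by
    intro ε hε
    obtain ⟨j', hj', hj'v⟩ := exists_hit (η := ext ε) (by omega : i ≤ c + 1) m (by omega)
    exact ⟨j', hj', hj'v⟩
  apply Finset.card_bij' (fun ε _ => reflect i (c+1) ε) (fun ε _ => reflect i (c+1) ε)
  · intro ε hε
    simp only [Finset.mem_filter, Finset.mem_univ, true_and] at hε ⊢
    obtain ⟨hs, hr, _⟩ := reflect_spec i (c+1) ε (hhit1 ε hε.2)
    rw [hs, hε.1]
  · intro ε hε
    simp only [Finset.mem_filter, Finset.mem_univ, true_and] at hε ⊢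
    obtain ⟨hs, hr, _⟩ := reflect_spec i (c+1) ε (hhit2 ε hε)
    constructor
    · rw [hs, hε]; ring
    · obtain ⟨j, hjm, hj⟩ := hr
      exact ⟨j, hjm, le_of_eq hj.symm⟩
  · intro ε hε
    simp only [Finset.mem_filter, Finset.mem_univ, true_and] at hε
    exact (reflect_spec i (c+1) ε (hhit1 ε hε.2)).2.2
  · intro ε hε
    simp only [Finset.mem_filter, Finset.mem_univ, true_and] at hε
    exact (reflect_spec i (c+1) ε (hhit2 ε hε)).2.2

/-- number of step sequences whose walk ends at `y` staying `≤ c` -/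
def bddCnt (i : ℤ) (m : ℕ) (y c : ℤ) : ℕ :=
  ((Finset.univ : Finset (Fin m → Bool)).filter
    (fun ε => pos i (ext ε) m = y ∧ ∀ j, j ≤ m → pos i (ext ε) j ≤ c)).card

lemma bddCnt_spec (i : ℤ) (m : ℕ) (y c : ℤ) (hi : i ≤ c) (hy : y ≤ c) :
    bddCnt i m y c + endCnt i m (2 * (c + 1) - y) = endCnt i m y := by
  classical
  rw [bddCnt, endCnt, endCnt, ← card_hits i m y c hi hy]
  have h1 : ((Finset.univ : Finset (Fin m → Bool)).filter
      (fun ε => pos i (ext ε) m = y ∧ ∀ j, j ≤ m → pos i (ext ε) j ≤ c)) =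
      ((Finset.univ : Finset (Fin m → Bool)).filter (fun ε => pos i (ext ε) m = y)).filter
        (fun ε => ¬ ∃ j, j ≤ m ∧ c + 1 ≤ pos i (ext ε) j) := by
    rw [Finset.filter_filter]
    apply Finset.filter_congr
    intro ε _
    constructor
    · rintro ⟨h1, h2⟩; exact ⟨h1, by push_neg; intro j hj; have := h2 j hj; omega⟩
    · rintro ⟨h1, h2⟩; push_neg at h2; exact ⟨h1, fun j hj => by have := h2 j hj; omega⟩
  have h2 : ((Finset.univ : Finset (Fin m → Bool)).filter
      (fun ε => pos i (ext ε) m = y ∧ ∃ j, j ≤ m ∧ c + 1 ≤ pos i (ext ε) j)) =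
      ((Finset.univ : Finset (Fin m → Bool)).filter (fun ε => pos i (ext ε) m = y)).filter
        (fun ε => ∃ j, j ≤ m ∧ c + 1 ≤ pos i (ext ε) j) := by
    rw [Finset.filter_filter]
  rw [h1, h2, add_comm]
  exact Finset.card_filter_add_card_filter_not _

/-! ### binomial arithmetic -/

lemma choose_anti (m k : ℕ) (h : m ≤ 2*k+1) : Nat.choose m (k+1) ≤ Nat.choose m k := by
  have h1 := Nat.choose_succ_right_eq m k
  have h2 : m - k ≤ k + 1 := by omega
  have h3 : Nat.choose m (k+1) * (k+1) ≤ Nat.choose m k * (k+1) := by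
    calc Nat.choose m (k+1) * (k+1) = Nat.choose m k * (m-k) := h1
      _ ≤ Nat.choose m k * (k+1) := Nat.mul_le_mul_left _ h2
  exact Nat.le_of_mul_le_mul_right h3 (by omega)

lemma choose_id1 (m k : ℕ) : Nat.choose (m+1) k * (m+1-k) = (m+1) * Nat.choose m k := by
  have h1 := Nat.choose_succ_right_eq (m+1) k
  have h2 : (m+1) * Nat.choose m k = Nat.choose (m+1) (k+1) * (k+1) :=
    Nat.add_one_mul_choose_eq m k
  omega

lemma chain_step1 (m k : ℕ) (hmk : m ≤ 2*k) (hk : k ≤ m) (hcond : m + 2 ≤ (2*k-m)^2) :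
    2 * (Nat.choose m k - Nat.choose m (k+1)) ≤
      Nat.choose (m+1) k - Nat.choose (m+1) (k+1) := by
  have hba : Nat.choose m (k+1) ≤ Nat.choose m k := choose_anti m k (by omega)
  have hb'a' : Nat.choose (m+1) (k+1) ≤ Nat.choose (m+1) k := choose_anti (m+1) k (by omega)
  have hM : 0 < (k+1) * (m+1-k) := Nat.mul_pos (by omega) (by omega)
  apply Nat.le_of_mul_le_mul_left _ hM
  have h1 : ((Nat.choose m (k+1) : ℤ)) * (k+1) = (Nat.choose m k : ℤ) * ((m:ℤ) - k) := by
    have := Nat.choose_succ_right_eq m k; zify [hk] at this; linarith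
  have h2 : ((Nat.choose (m+1) (k+1) : ℤ)) * (k+1) = (Nat.choose (m+1) k : ℤ) * ((m:ℤ) + 1 - k) := by
    have := Nat.choose_succ_right_eq (m+1) k; zify [show k ≤ m+1 by omega] at this; linarith
  have h3 : ((Nat.choose (m+1) k : ℤ)) * ((m:ℤ) + 1 - k) = ((m:ℤ)+1) * (Nat.choose m k : ℤ) := by
    have := choose_id1 m k; zify [show k ≤ m+1 by omega] at this; linarith
  have hcondZ : (m:ℤ) + 2 ≤ (2*(k:ℤ) - m)^2 := by
    zify [hmk] at hcond; linarith
  zify [hba, hb'a', show k ≤ m + 1 by omega]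
  set a : ℤ := (Nat.choose m k : ℤ)
  set b : ℤ := (Nat.choose m (k+1) : ℤ)
  set a' : ℤ := (Nat.choose (m+1) k : ℤ)
  set b' : ℤ := (Nat.choose (m+1) (k+1) : ℤ)
  set d : ℤ := 2*(k:ℤ) - m with hd
  have ha0 : (0:ℤ) ≤ a := Int.natCast_nonneg _
  have e1 : ((k:ℤ)+1) * ((m:ℤ)+1-k) * (2*(a-b)) = 2*((m:ℤ)+1-k)*(d+1)*a := by
    linear_combination (-2*((m:ℤ)+1-(k:ℤ))) * h1
  have e2 : ((k:ℤ)+1) * ((m:ℤ)+1-k) * (a'-b') = ((m:ℤ)+1)*d*a := by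
    linear_combination (-((m:ℤ)+1-(k:ℤ))) * h2 + d * h3
  calc ((k:ℤ)+1) * ((m:ℤ)+1-k) * (2*(a-b)) = 2*((m:ℤ)+1-k)*(d+1)*a := e1
    _ ≤ ((m:ℤ)+1)*d*a := by
        have hgap : ((m:ℤ)+1)*d*a - 2*((m:ℤ)+1-(k:ℤ))*(d+1)*a = (d^2 - (m:ℤ) - 2)*a := by
          simp only [hd]; ring
        nlinarith [mul_nonneg (show (0:ℤ) ≤ d^2 - (m:ℤ) - 2 by linarith) ha0, hgap]
    _ = ((k:ℤ)+1) * ((m:ℤ)+1-k) * (a'-b') := e2.symm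

lemma chain_step2 (m k : ℕ) (hmk : m ≤ 2*k) (hk : k ≤ m)
    (hcond : 3*m + 6 ≤ (2*k-m)^2 + 2*(2*k-m)) :
    4 * (Nat.choose m k - Nat.choose m (k+1)) ≤
      Nat.choose (m+2) (k+1) - Nat.choose (m+2) (k+2) := by
  have hba : Nat.choose m (k+1) ≤ Nat.choose m k := choose_anti m k (by omega)
  have hb'a' : Nat.choose (m+2) (k+2) ≤ Nat.choose (m+2) (k+1) := choose_anti (m+2) (k+1) (by omega)
  have hM : 0 < (k+1) * ((k+2) * (m+1-k)) := Nat.mul_pos (by omega) (Nat.mul_pos (by omega) (by omega))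
  apply Nat.le_of_mul_le_mul_left _ hM
  have h1 : ((Nat.choose m (k+1) : ℤ)) * (k+1) = (Nat.choose m k : ℤ) * ((m:ℤ) - k) := by
    have := Nat.choose_succ_right_eq m k; zify [hk] at this; linarith
  have h2 : ((Nat.choose (m+2) (k+2) : ℤ)) * (k+2) = (Nat.choose (m+2) (k+1) : ℤ) * ((m:ℤ) + 1 - k) := by
    have := Nat.choose_succ_right_eq (m+2) (k+1)
    zify [show k + 1 ≤ m + 2 by omega] at this; linarith
  have h3 : ((m:ℤ)+2) * (Nat.choose (m+1) k : ℤ) = (Nat.choose (m+2) (k+1) : ℤ) * ((k:ℤ)+1) := by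
    have : (m+2) * Nat.choose (m+1) k = Nat.choose (m+2) (k+1) * (k+1) :=
      Nat.add_one_mul_choose_eq (m+1) k
    zify at this; linarith
  have h4 : ((Nat.choose (m+1) k : ℤ)) * ((m:ℤ) + 1 - k) = ((m:ℤ)+1) * (Nat.choose m k : ℤ) := by
    have := choose_id1 m k; zify [show k ≤ m+1 by omega] at this; linarith
  have hcondZ : 3*(m:ℤ) + 6 ≤ (2*(k:ℤ) - m)^2 + 2*(2*(k:ℤ) - m) := by
    zify [hmk] at hcond; linarith
  zify [hba, hb'a', show k ≤ m + 1 by omega]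
  set a : ℤ := (Nat.choose m k : ℤ)
  set b : ℤ := (Nat.choose m (k+1) : ℤ)
  set a' : ℤ := (Nat.choose (m+2) (k+1) : ℤ)
  set b' : ℤ := (Nat.choose (m+2) (k+2) : ℤ)
  set c1 : ℤ := (Nat.choose (m+1) k : ℤ)
  set d : ℤ := 2*(k:ℤ) - m with hd
  have ha0 : (0:ℤ) ≤ a := Int.natCast_nonneg _
  have hd0 : (0:ℤ) ≤ d := by simp only [hd]; push_cast; omega
  have e1 : ((k:ℤ)+1) * (((k:ℤ)+2) * (((m:ℤ)+1-k))) * (4*(a-b))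
      = 4*((k:ℤ)+2)*((m:ℤ)+1-k)*(d+1)*a := by
    linear_combination (-4*((k:ℤ)+2)*((m:ℤ)+1-(k:ℤ))) * h1
  have e2 : ((k:ℤ)+1) * (((k:ℤ)+2) * (((m:ℤ)+1-k))) * (a'-b')
      = (d+1)*((m:ℤ)+1)*((m:ℤ)+2)*a := by
    linear_combination (-((k:ℤ)+1)*((m:ℤ)+1-(k:ℤ))) * h2 - ((d+1)*((m:ℤ)+1-(k:ℤ))) * h3 + ((d+1)*((m:ℤ)+2)) * h4
  calc ((k:ℤ)+1) * (((k:ℤ)+2) * (((m:ℤ)+1-k))) * (4*(a-b))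
      = 4*((k:ℤ)+2)*((m:ℤ)+1-k)*(d+1)*a := e1
    _ ≤ (d+1)*((m:ℤ)+1)*((m:ℤ)+2)*a := by
        have hgap : (d+1)*((m:ℤ)+1)*((m:ℤ)+2)*a - 4*((k:ℤ)+2)*((m:ℤ)+1-(k:ℤ))*(d+1)*a
            = (d^2 + 2*d - 3*(m:ℤ) - 6)*((d+1)*a) := by
          simp only [hd]; ring
        nlinarith [mul_nonneg (show (0:ℤ) ≤ d^2 + 2*d - 3*(m:ℤ) - 6 by linarith)
          (mul_nonneg (show (0:ℤ) ≤ d + 1 by linarith) ha0), hgap]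
    _ = ((k:ℤ)+1) * (((k:ℤ)+2) * (((m:ℤ)+1-k))) * (a'-b') := e2.symm

lemma chainL2 (m k : ℕ) (hmk : m ≤ 2*k) (hk : k ≤ m) :
    ∀ u, (∀ j, j < u → 3*(m+2*j) + 6 ≤ (2*k-m)^2 + 2*(2*k-m)) →
    4^u * (Nat.choose m k - Nat.choose m (k+1)) ≤
      Nat.choose (m+2*u) (k+u) - Nat.choose (m+2*u) (k+u+1) := by
  intro u
  induction u with
  | zero => intro _; simpa using le_refl _
  | succ u ih =>
      intro hcond
      have h1 : 4^u * (Nat.choose m k - Nat.choose m (k+1)) ≤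
          Nat.choose (m+2*u) (k+u) - Nat.choose (m+2*u) (k+u+1) :=
        ih (fun j hj => hcond j (by omega))
      have h2 : 4 * (Nat.choose (m+2*u) (k+u) - Nat.choose (m+2*u) (k+u+1)) ≤
          Nat.choose (m+2*u+2) (k+u+1) - Nat.choose (m+2*u+2) (k+u+2) := by
        apply chain_step2 (m+2*u) (k+u) (by omega) (by omega)
        have := hcond u (by omega)
        have he : 2*(k+u) - (m+2*u) = 2*k - m := by omega
        rw [he]
        omega
      calc 4^(u+1) * (Nat.choose m k - Nat.choose m (k+1))
          = 4 * (4^u * (Nat.choose m k - Nat.choose m (k+1))) := by ring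
        _ ≤ 4 * (Nat.choose (m+2*u) (k+u) - Nat.choose (m+2*u) (k+u+1)) :=
            Nat.mul_le_mul_left 4 h1
        _ ≤ Nat.choose (m+2*u+2) (k+u+1) - Nat.choose (m+2*u+2) (k+u+2) := h2
        _ = Nat.choose (m+2*(u+1)) (k+(u+1)) - Nat.choose (m+2*(u+1)) (k+(u+1)+1) := by
            congr 2 <;> omega

lemma chainL1 (m k : ℕ) (hk : k ≤ m) :
    ∀ v, (∀ j, j < v → m + j + 2 ≤ (2*k-(m+j))^2) →
    2^v * (Nat.choose m k - Nat.choose m (k+1)) ≤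
      Nat.choose (m+v) k - Nat.choose (m+v) (k+1) := by
  intro v
  induction v with
  | zero => intro _; simpa using le_refl _
  | succ v ih =>
      intro hcond
      have h1 := ih (fun j hj => hcond j (by omega))
      have hv := hcond v (by omega)
      have hmv : m + v ≤ 2*k := by
        by_contra hc
        push_neg at hc
        have : 2*k - (m+v) = 0 := by omega
        rw [this] at hv
        simp at hv
      have h2 : 2 * (Nat.choose (m+v) k - Nat.choose (m+v) (k+1)) ≤
          Nat.choose (m+v+1) k - Nat.choose (m+v+1) (k+1) := by
        apply chain_step1 (m+v) k hmv (by omega)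
        have he : 2*k - (m+v) = 2*k - (m+v) := rfl
        omega
      calc 2^(v+1) * (Nat.choose m k - Nat.choose m (k+1))
          = 2 * (2^v * (Nat.choose m k - Nat.choose m (k+1))) := by ring
        _ ≤ 2 * (Nat.choose (m+v) k - Nat.choose (m+v) (k+1)) := Nat.mul_le_mul_left 2 h1
        _ ≤ Nat.choose (m+v+1) k - Nat.choose (m+v+1) (k+1) := h2
        _ = Nat.choose (m+(v+1)) k - Nat.choose (m+(v+1)) (k+1) := by congr 2 <;> omega

lemma chain_main (m k u v : ℕ) (hmk : m ≤ 2*k) (hk : k ≤ m)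
    (hcond2 : ∀ j, j < u → 3*(m+2*j) + 6 ≤ (2*k-m)^2 + 2*(2*k-m))
    (hcond1 : ∀ j, j < v → m + 2*u + j + 2 ≤ (2*(k+u)-(m+2*u+j))^2) :
    2^(2*u+v) * (Nat.choose m k - Nat.choose m (k+1)) ≤
      Nat.choose (m+2*u+v) (k+u) - Nat.choose (m+2*u+v) (k+u+1) := by
  have h1 := chainL2 m k hmk hk u hcond2
  have h2 := chainL1 (m+2*u) (k+u) (by omega) v (fun j hj => by
    have := hcond1 j hj
    omega)
  calc 2^(2*u+v) * (Nat.choose m k - Nat.choose m (k+1))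
      = 2^v * (4^u * (Nat.choose m k - Nat.choose m (k+1))) := by
        rw [show (4:ℕ) = 2^2 from rfl, ← pow_mul, ← mul_assoc, ← pow_add, Nat.add_comm v (2*u)]
    _ ≤ 2^v * (Nat.choose (m+2*u) (k+u) - Nat.choose (m+2*u) (k+u+1)) :=
        Nat.mul_le_mul_left _ h1
    _ ≤ Nat.choose (m+2*u+v) (k+u) - Nat.choose (m+2*u+v) (k+u+1) := h2

/-! ### splitting -/

section Split

variable {t s : ℕ}

def pre (hs : s ≤ t) (ε : Fin t → Bool) : Fin s → Bool :=
  fun l => ε ⟨l, lt_of_lt_of_le l.2 hs⟩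

def suf (hs : s ≤ t) (ε : Fin t → Bool) : Fin (t - s) → Bool :=
  fun r => ε ⟨s + r, by omega⟩

def splice (hs : s ≤ t) (π : Fin s → Bool) (τ : Fin (t - s) → Bool) : Fin t → Bool :=
  fun l => if h : (l : ℕ) < s then π ⟨l, h⟩ else τ ⟨(l : ℕ) - s, by omega⟩

lemma pre_splice (hs : s ≤ t) (π τ) : pre hs (splice hs π τ) = π := by
  funext l
  simp [pre, splice, l.2]

lemma suf_splice (hs : s ≤ t) (π τ) : suf hs (splice hs π τ) = τ := by
  funext r
  have h1 : ¬ (s + (r : ℕ) < s) := by omega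
  simp only [suf, splice, h1, dif_neg]
  exact congrArg τ (Fin.ext (by simp))

lemma splice_pre_suf (hs : s ≤ t) (ε) : splice hs (pre hs ε) (suf hs ε) = ε := by
  funext l
  by_cases h : (l : ℕ) < s
  · simp [splice, pre, h]
  · simp only [splice, pre, suf, dif_neg h]
    exact congrArg ε (Fin.ext (by simp; omega))

lemma pos_pre (i : ℤ) (hs : s ≤ t) (ε : Fin t → Bool) {j : ℕ} (hj : j ≤ s) :
    pos i (ext (pre hs ε)) j = pos i (ext ε) j := by
  apply pos_congr
  intro l hl
  rw [ext_lt (pre hs ε) (show l < s by omega), ext_lt ε (show l < t by omega)]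
  rfl

lemma pos_suf (i : ℤ) (hs : s ≤ t) (ε : Fin t → Bool) {r : ℕ} (hr : r ≤ t - s) :
    pos (pos i (ext ε) s) (ext (suf hs ε)) r = pos i (ext ε) (s + r) := by
  induction r with
  | zero => simp
  | succ r ih =>
      have hr' : r ≤ t - s := by omega
      rw [show s + (r+1) = (s+r) + 1 from rfl, pos_succ, pos_succ, ih hr']
      congr 1
      rw [ext_lt (suf hs ε) (show r < t - s by omega), ext_lt ε (show s + r < t by omega)]
      rfl

end Split

/-! ### first-hit decomposition -/

/-- prefixes from `i` first hitting `0` at time `s` -/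
def hitPre (i : ℤ) (s : ℕ) : Finset (Fin s → Bool) :=
  (Finset.univ : Finset (Fin s → Bool)).filter
    (fun π => pos i (ext π) s = 0 ∧ ∀ j, j < s → 0 < pos i (ext π) j)

/-- sequences of length `t` whose walk first hits `0` at time `s` -/
def Ss (i : ℤ) (t s : ℕ) : Finset (Fin t → Bool) :=
  (Finset.univ : Finset (Fin t → Bool)).filter
    (fun ε => pos i (ext ε) s = 0 ∧ ∀ j, j < s → 0 < pos i (ext ε) j)

lemma card_Ss (i : ℤ) {t s : ℕ} (hs : s ≤ t) :
    (Ss i t s).card = (hitPre i s).card * 2 ^ (t - s) := by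
  classical
  have hcard : ((hitPre i s) ×ˢ (Finset.univ : Finset (Fin (t-s) → Bool))).card
      = (hitPre i s).card * 2 ^ (t - s) := by
    rw [Finset.card_product]
    congr 1
    simp [Finset.card_univ]
  rw [← hcard]
  apply Finset.card_bij' (fun ε _ => (pre hs ε, suf hs ε)) (fun p _ => splice hs p.1 p.2)
  · intro ε hε
    simp only [Ss, Finset.mem_filter, Finset.mem_univ, true_and] at hε
    simp only [Finset.mem_product, Finset.mem_univ, and_true, hitPre, Finset.mem_filter, true_and]
    constructor
    · rw [pos_pre i hs ε (le_refl s)]; exact hε.1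
    · intro j hj; rw [pos_pre i hs ε (le_of_lt hj)]; exact hε.2 j hj
  · intro p hp
    simp only [Finset.mem_product, hitPre, Finset.mem_filter, Finset.mem_univ, true_and, and_true] at hp
    simp only [Ss, Finset.mem_filter, Finset.mem_univ, true_and]
    constructor
    · rw [← pos_pre i hs _ (le_refl s), pre_splice]; exact hp.1
    · intro j hj; rw [← pos_pre i hs _ (le_of_lt hj), pre_splice]; exact hp.2 j hj
  · intro ε _; exact splice_pre_suf hs ε
  · intro p _; simp [pre_splice, suf_splice]

/-- sequences whose walk ends at `n` staying `≤ n` -/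
def upSet (i : ℤ) (t : ℕ) (n : ℤ) : Finset (Fin t → Bool) :=
  (Finset.univ : Finset (Fin t → Bool)).filter
    (fun ε => pos i (ext ε) t = n ∧ ∀ j, j ≤ t → pos i (ext ε) j ≤ n)

lemma card_upSet (i : ℤ) (t : ℕ) (n : ℤ) : (upSet i t n).card = bddCnt i t n n := rfl

/-- target of the suffix map : sequences from `0` ending at `n` staying `≤ n` -/
lemma card_inter_le (i n : ℤ) {t s : ℕ} (hs : s ≤ t) :
    ((upSet i t n) ∩ Ss i t s).card ≤ (hitPre i s).card * bddCnt 0 (t-s) n n := by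
  classical
  have hcard : ((hitPre i s) ×ˢ ((Finset.univ : Finset (Fin (t-s) → Bool)).filter
      (fun τ => pos 0 (ext τ) (t-s) = n ∧ ∀ j, j ≤ t-s → pos 0 (ext τ) j ≤ n))).card
      = (hitPre i s).card * bddCnt 0 (t-s) n n := by
    rw [Finset.card_product]; rfl
  rw [← hcard]
  apply Finset.card_le_card_of_injOn (fun ε => (pre hs ε, suf hs ε))
  · intro ε hε
    rw [Finset.mem_coe] at hε ⊢
    simp only [Finset.mem_inter, upSet, Ss, Finset.mem_filter, Finset.mem_univ, true_and] at hε
    obtain ⟨⟨hend, hbdd⟩, h0, hpos⟩ := hε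
    have hsuf : ∀ r, r ≤ t - s → pos 0 (ext (suf hs ε)) r = pos i (ext ε) (s + r) := by
      intro r hr
      rw [← h0]
      exact pos_suf i hs ε hr
    simp only [Finset.mem_product, hitPre, Finset.mem_filter, Finset.mem_univ, true_and]
    refine ⟨⟨?_, ?_⟩, ?_, ?_⟩
    · rw [pos_pre i hs ε (le_refl s)]; exact h0
    · intro j hj; rw [pos_pre i hs ε (le_of_lt hj)]; exact hpos j hj
    · rw [hsuf (t-s) (le_refl _), show s + (t - s) = t by omega]; exact hend
    · intro j hj; rw [hsuf j hj]; exact hbdd (s+j) (by omega)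
  · intro ε hε ε' hε' heq
    have h1 : pre hs ε = pre hs ε' := congrArg Prod.fst heq
    have h2 : suf hs ε = suf hs ε' := congrArg Prod.snd heq
    rw [← splice_pre_suf hs ε, ← splice_pre_suf hs ε', h1, h2]

/-- sequences whose walk dips `≤ 0` somewhere -/
def Fset (i : ℤ) (t : ℕ) : Finset (Fin t → Bool) :=
  (Finset.univ : Finset (Fin t → Bool)).filter
    (fun ε => ∃ j, j ≤ t ∧ pos i (ext ε) j ≤ 0)

lemma first_hit {i : ℤ} (hi : 1 ≤ i) {t : ℕ} (ε : Fin t → Bool)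
    (h : ∃ j, j ≤ t ∧ pos i (ext ε) j ≤ 0) :
    ∃ s, s ≤ t ∧ pos i (ext ε) s = 0 ∧ ∀ j, j < s → 0 < pos i (ext ε) j := by
  classical
  obtain ⟨j₁, hj₁t, hj₁⟩ := h
  have hex : ∃ j, pos i (ext ε) j ≤ 0 := ⟨j₁, hj₁⟩
  set s := Nat.find hex with hs
  have hst : s ≤ t := le_trans (Nat.find_min' hex hj₁) hj₁t
  have hmin : ∀ j, j < s → 0 < pos i (ext ε) j := by
    intro j hj
    have := Nat.find_min hex hj
    omega
  have hspec : pos i (ext ε) s ≤ 0 := Nat.find_spec hex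
  have hs0 : s ≠ 0 := by
    intro hc
    rw [hc] at hspec
    simp at hspec
    omega
  obtain ⟨s', hs'⟩ : ∃ s', s = s' + 1 := ⟨s - 1, by omega⟩
  have hprev : 0 < pos i (ext ε) s' := hmin s' (by omega)
  have hstep := pos_succ i (ext ε) s'
  have := le_stp (ext ε s')
  rw [hs'] at hspec hmin hst
  exact ⟨s'+1, hst, by omega, hmin⟩

lemma Fset_subset_biUnion {i : ℤ} (hi : 1 ≤ i) (t : ℕ) :
    Fset i t ⊆ (Finset.range (t+1)).biUnion (fun s => Ss i t s) := by
  intro ε hε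
  simp only [Fset, Finset.mem_filter, Finset.mem_univ, true_and] at hε
  obtain ⟨s, hst, h0, hpos⟩ := first_hit hi ε hε
  simp only [Finset.mem_biUnion, Finset.mem_range]
  exact ⟨s, by omega, by simp only [Ss, Finset.mem_filter, Finset.mem_univ, true_and]; exact ⟨h0, hpos⟩⟩

lemma biUnion_subset_Fset (i : ℤ) (t : ℕ) :
    (Finset.range (t+1)).biUnion (fun s => Ss i t s) ⊆ Fset i t := by
  intro ε hε
  simp only [Finset.mem_biUnion, Finset.mem_range, Ss, Finset.mem_filter, Finset.mem_univ,
    true_and] at hε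
  obtain ⟨s, hst, h0, _⟩ := hε
  simp only [Fset, Finset.mem_filter, Finset.mem_univ, true_and]
  exact ⟨s, by omega, le_of_eq h0⟩

lemma Ss_disjoint (i : ℤ) (t : ℕ) {s s' : ℕ} (h : s ≠ s') :
    Disjoint (Ss i t s) (Ss i t s') := by
  rw [Finset.disjoint_left]
  intro ε h1 h2
  simp only [Ss, Finset.mem_filter, Finset.mem_univ, true_and] at h1 h2
  rcases Nat.lt_or_ge s s' with hlt | hge
  · have := h2.2 s hlt
    omega
  · have hlt : s' < s := by omega
    have := h1.2 s' hlt
    omega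

lemma card_Fset {i : ℤ} (hi : 1 ≤ i) (t : ℕ) :
    (Fset i t).card = ∑ s ∈ Finset.range (t+1), (hitPre i s).card * 2 ^ (t - s) := by
  have he : Fset i t = (Finset.range (t+1)).biUnion (fun s => Ss i t s) :=
    le_antisymm (Fset_subset_biUnion hi t) (biUnion_subset_Fset i t)
  rw [he, Finset.card_biUnion (fun s _ s' _ hss' => Ss_disjoint i t hss')]
  apply Finset.sum_congr rfl
  intro s hsr
  exact card_Ss i (by rw [Finset.mem_range] at hsr; omega)

/-! ### count formulas -/

lemma endCnt_choose_all (i : ℤ) (m k : ℕ) (y : ℤ) (hy : y = i + 2*k - m) :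
    endCnt i m y = Nat.choose m k := by
  by_cases hk : k ≤ m
  · exact endCnt_eq_choose i m k hk y hy
  · rw [Nat.choose_eq_zero_of_lt (by omega)]
    apply endCnt_eq_zero
    intro k' hk' hc
    rw [hy] at hc
    omega

lemma bddCnt_eq_D (i0 : ℤ) (m k : ℕ) (hk : k ≤ m) (n : ℤ) (hin : i0 ≤ n)
    (hy : n = i0 + 2*k - m) :
    bddCnt i0 m n n = Nat.choose m k - Nat.choose m (k+1) := by
  have h1 := bddCnt_spec i0 m n n hin (le_refl n)
  have h2 : endCnt i0 m n = Nat.choose m k := endCnt_choose_all i0 m k n hy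
  have h3 : endCnt i0 m (2*(n+1) - n) = Nat.choose m (k+1) := by
    apply endCnt_choose_all
    rw [hy]; push_cast; ring
  omega

lemma per_s (n i t s : ℕ) (hn2 : 2 ≤ n) (hi1 : 1 ≤ i) (h2i : 2*i ≤ n+1)
    (h4t : 4*t ≤ n^2) (hs : s ≤ t) :
    2^t * ((hitPre (i:ℤ) s).card * bddCnt 0 (t-s) (n:ℤ) (n:ℤ)) ≤
      bddCnt (i:ℤ) t (n:ℤ) (n:ℤ) * ((hitPre (i:ℤ) s).card * 2^(t-s)) := by
  by_cases hp0 : (hitPre (i:ℤ) s).card = 0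
  · simp [hp0]
  by_cases hG0 : bddCnt 0 (t-s) (n:ℤ) (n:ℤ) = 0
  · simp [hG0]
  -- extract a prefix witness
  obtain ⟨π, hπ⟩ := Finset.card_pos.mp (Nat.pos_of_ne_zero hp0)
  simp only [hitPre, Finset.mem_filter, Finset.mem_univ, true_and] at hπ
  have hπend := pos_ext_end (i:ℤ) π
  rw [hπ.1] at hπend
  set cπ := (Finset.univ.filter fun l => π l = true).card with hcπ
  have hsi : s = i + 2*cπ := by omega
  -- extract a bounded-path witness
  obtain ⟨τ, hτ⟩ := Finset.card_pos.mp (Nat.pos_of_ne_zero hG0)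
  simp only [bddCnt, Finset.mem_filter, Finset.mem_univ, true_and] at hτ
  have hτend := pos_ext_end (0:ℤ) τ
  rw [hτ.1] at hτend
  set k0 := (Finset.univ.filter fun l => τ l = true).card with hk0
  have hk0le : k0 ≤ t - s := le_trans (Finset.card_filter_le _ _) (by simp)
  have hmn : (t - s) + n = 2*k0 ∧ n ≤ t - s := by omega
  set u := cπ with hu
  -- formulas
  have hG : bddCnt 0 (t-s) (n:ℤ) (n:ℤ) = Nat.choose (t-s) k0 - Nat.choose (t-s) (k0+1) := by
    apply bddCnt_eq_D 0 (t-s) k0 (by omega) (n:ℤ) (by positivity)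
    push_cast; omega
  have hA : bddCnt (i:ℤ) t (n:ℤ) (n:ℤ) = Nat.choose t (k0+u) - Nat.choose t (k0+u+1) := by
    apply bddCnt_eq_D (i:ℤ) t (k0+u) (by omega) (n:ℤ) (by exact_mod_cast by omega)
    push_cast; omega
  -- chain conditions
  have hcond2 : ∀ j, j < u → 3*((t-s)+2*j) + 6 ≤ (2*k0-(t-s))^2 + 2*(2*k0-(t-s)) := by
    intro j hj
    have he : 2*k0 - (t-s) = n := by omega
    rw [he]
    have h1 : 3*((t-s)+2*j) + 6 ≤ 4*t := by omega
    exact le_trans h1 (le_trans h4t (Nat.le_add_right _ _))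
  have hcond1 : ∀ j, j < i → (t-s) + 2*u + j + 2 ≤ (2*(k0+u)-((t-s)+2*u+j))^2 := by
    intro j hj
    have he : 2*(k0+u) - ((t-s)+2*u+j) = n - j := by omega
    rw [he]
    have h1 : (n-i+1)^2 ≤ (n-j)^2 := Nat.pow_le_pow_left (by omega) 2
    have h2 : (n+1)^2 ≤ 4*(n-i+1)^2 := by
      have ha : (n+1) ≤ 2*(n-i+1) := by omega
      have hb : (n+1)^2 ≤ (2*(n-i+1))^2 := Nat.pow_le_pow_left ha 2
      have hc : (2*(n-i+1))^2 = 4*(n-i+1)^2 := by ring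
      omega
    have h3 : 4*t + 4 ≤ (n+1)^2 := by
      have hh : (n+1)^2 = n^2 + 2*n + 1 := by ring
      omega
    omega
  have hchain := chain_main (t-s) k0 u i (by omega) (by omega) hcond2 hcond1
  rw [show (t-s) + 2*u + i = t by omega] at hchain
  rw [show 2*u + i = s by omega] at hchain
  rw [hG, hA]
  calc 2^t * ((hitPre (i:ℤ) s).card * (Nat.choose (t-s) k0 - Nat.choose (t-s) (k0+1)))
      = (hitPre (i:ℤ) s).card * (2^s * (Nat.choose (t-s) k0 - Nat.choose (t-s) (k0+1))) * 2^(t-s) := by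
        rw [show (2:ℕ)^t = 2^s * 2^(t-s) from by rw [← pow_add]; congr 1; omega]
        ring
    _ ≤ (hitPre (i:ℤ) s).card * (Nat.choose t (k0+u) - Nat.choose t (k0+u+1)) * 2^(t-s) := by
        apply Nat.mul_le_mul_right
        exact Nat.mul_le_mul_left _ hchain
    _ = (Nat.choose t (k0+u) - Nat.choose t (k0+u+1)) * ((hitPre (i:ℤ) s).card * 2^(t-s)) := by
        ring

end WalkAux

open WalkAux in
/-- For a positive integer `n`, an integer `1 ≤ i ≤ ⌈n/2⌉`, and a
positive integer `t ≤ n²/4` with `t ≡ n - i (mod 2)`: with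
`A = #{w : w(t) = n, MAX(w) = n}`, `F = #{w : MIN(w) < 1}`, and
`A' = #{w : w(t) = n, MAX(w) = n, MIN(w) < 1}` (all walks of length `t` started at `i`),
we have `A · F ≥ 2^t · A'`. -/
theorem conditioning_on_low_min (n i t : ℕ) (hn : 0 < n)
    (hi1 : 1 ≤ i) (hi2 : i ≤ (n + 1) / 2) (ht0 : 0 < t)
    (ht2 : (t : ℝ) ≤ (n : ℝ) ^ 2 / 4)
    (hpar : (t : ℤ) % 2 = ((n : ℤ) - (i : ℤ)) % 2) :
    walkCount (i : ℤ) t (fun w => endsAt (n : ℤ) w ∧ maxEq (n : ℤ) w) *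
        walkCount (i : ℤ) t (fun w => ∃ j, w j < 1) ≥
      2 ^ t *
        walkCount (i : ℤ) t
          (fun w => endsAt (n : ℤ) w ∧ maxEq (n : ℤ) w ∧ ∃ j, w j < 1) := by
  classical
  have h2i : 2 * i ≤ n + 1 := by omega
  have h4t : 4 * t ≤ n ^ 2 := by
    have h1 : (4 * t : ℝ) ≤ ((n : ℝ)) ^ 2 := by linarith
    have h2 : ((4 * t : ℕ) : ℝ) ≤ ((n ^ 2 : ℕ) : ℝ) := by push_cast; linarith
    exact_mod_cast h2
  have hn2 : 2 ≤ n := by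
    by_contra hc
    push_neg at hc
    interval_cases n <;> omega
  have hi1' : (1 : ℤ) ≤ (i : ℤ) := by exact_mod_cast hi1
  -- identify the three walkCounts
  have hwalk : ∀ (ε : Fin t → Bool) (j : Fin (t+1)),
      toWalk (i : ℤ) t ε j = pos (i : ℤ) (ext ε) (j : ℕ) := fun _ _ => rfl
  have hiffA : ∀ ε : Fin t → Bool,
      (endsAt (n : ℤ) (toWalk (i:ℤ) t ε) ∧ maxEq (n:ℤ) (toWalk (i:ℤ) t ε)) ↔
      (pos (i:ℤ) (ext ε) t = n ∧ ∀ j, j ≤ t → pos (i:ℤ) (ext ε) j ≤ n) := by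
    intro ε
    constructor
    · rintro ⟨he, hub, -⟩
      refine ⟨he, fun j hj => ?_⟩
      exact hub ⟨j, by omega⟩
    · rintro ⟨he, hub⟩
      exact ⟨he, fun j => hub (j : ℕ) (by omega), ⟨Fin.last t, he⟩⟩
  have hiffF : ∀ ε : Fin t → Bool,
      (∃ j : Fin (t+1), toWalk (i:ℤ) t ε j < 1) ↔
      (∃ j, j ≤ t ∧ pos (i:ℤ) (ext ε) j ≤ 0) := by
    intro ε
    constructor
    · rintro ⟨j, hj⟩
      exact ⟨(j : ℕ), by omega, by have := hwalk ε j; omega⟩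
    · rintro ⟨j, hjt, hj⟩
      refine ⟨⟨j, by omega⟩, ?_⟩
      have := hwalk ε ⟨j, by omega⟩
      simp only [this]
      omega
  have hA : walkCount (i:ℤ) t (fun w => endsAt (n:ℤ) w ∧ maxEq (n:ℤ) w)
      = (upSet (i:ℤ) t (n:ℤ)).card := by
    rw [walkCount_eq]
    congr 1
    ext ε
    simp only [Finset.mem_filter, Finset.mem_univ, true_and, upSet]
    exact hiffA ε
  have hF : walkCount (i:ℤ) t (fun w => ∃ j, w j < 1) = (Fset (i:ℤ) t).card := by
    rw [walkCount_eq]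
    congr 1
    ext ε
    simp only [Finset.mem_filter, Finset.mem_univ, true_and, Fset]
    exact hiffF ε
  have hA' : walkCount (i:ℤ) t (fun w => endsAt (n:ℤ) w ∧ maxEq (n:ℤ) w ∧ ∃ j, w j < 1)
      = ((upSet (i:ℤ) t (n:ℤ)) ∩ (Fset (i:ℤ) t)).card := by
    rw [walkCount_eq]
    congr 1
    ext ε
    simp only [Finset.mem_filter, Finset.mem_univ, true_and, Finset.mem_inter, upSet, Fset]
    constructor
    · rintro ⟨h1, h2, h3⟩
      exact ⟨(hiffA ε).mp ⟨h1, h2⟩, (hiffF ε).mp h3⟩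
    · rintro ⟨h1, h2⟩
      obtain ⟨he, hub, hex⟩ := (hiffA ε).mpr h1
      exact ⟨he, ⟨hub, hex⟩, (hiffF ε).mpr h2⟩
  rw [hA, hF, hA']
  -- F decomposition
  rw [card_Fset hi1' t]
  -- A' bound
  have hsubset : (upSet (i:ℤ) t (n:ℤ)) ∩ (Fset (i:ℤ) t) ⊆
      (Finset.range (t+1)).biUnion (fun s => (upSet (i:ℤ) t (n:ℤ)) ∩ Ss (i:ℤ) t s) := by
    intro ε hε
    rw [Finset.mem_inter] at hε
    have := Fset_subset_biUnion hi1' t hε.2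
    simp only [Finset.mem_biUnion] at this ⊢
    obtain ⟨s, hs1, hs2⟩ := this
    exact ⟨s, hs1, Finset.mem_inter.mpr ⟨hε.1, hs2⟩⟩
  have hA'le : ((upSet (i:ℤ) t (n:ℤ)) ∩ (Fset (i:ℤ) t)).card ≤
      ∑ s ∈ Finset.range (t+1), (hitPre (i:ℤ) s).card * bddCnt 0 (t-s) (n:ℤ) (n:ℤ) := by
    calc ((upSet (i:ℤ) t (n:ℤ)) ∩ (Fset (i:ℤ) t)).card
        ≤ ((Finset.range (t+1)).biUnion (fun s => (upSet (i:ℤ) t (n:ℤ)) ∩ Ss (i:ℤ) t s)).card :=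
          Finset.card_le_card hsubset
      _ ≤ ∑ s ∈ Finset.range (t+1), ((upSet (i:ℤ) t (n:ℤ)) ∩ Ss (i:ℤ) t s).card :=
          Finset.card_biUnion_le
      _ ≤ ∑ s ∈ Finset.range (t+1), (hitPre (i:ℤ) s).card * bddCnt 0 (t-s) (n:ℤ) (n:ℤ) := by
          apply Finset.sum_le_sum
          intro s hsr
          have hst : s ≤ t := Nat.lt_succ_iff.mp (Finset.mem_range.mp hsr)
          exact card_inter_le (i:ℤ) (n:ℤ) hst
  calc 2 ^ t * ((upSet (i:ℤ) t (n:ℤ)) ∩ (Fset (i:ℤ) t)).card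
      ≤ 2 ^ t * ∑ s ∈ Finset.range (t+1), (hitPre (i:ℤ) s).card * bddCnt 0 (t-s) (n:ℤ) (n:ℤ) :=
        Nat.mul_le_mul_left _ hA'le
    _ = ∑ s ∈ Finset.range (t+1),
          2 ^ t * ((hitPre (i:ℤ) s).card * bddCnt 0 (t-s) (n:ℤ) (n:ℤ)) := Finset.mul_sum _ _ _
    _ ≤ ∑ s ∈ Finset.range (t+1),
          (upSet (i:ℤ) t (n:ℤ)).card * ((hitPre (i:ℤ) s).card * 2^(t-s)) := by
        apply Finset.sum_le_sum
        intro s hsr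
        have hst : s ≤ t := Nat.lt_succ_iff.mp (Finset.mem_range.mp hsr)
        rw [card_upSet]
        exact per_s n i t s hn2 hi1 h2i h4t hst
    _ = (upSet (i:ℤ) t (n:ℤ)).card * ∑ s ∈ Finset.range (t+1),
          (hitPre (i:ℤ) s).card * 2^(t-s) := (Finset.mul_sum _ _ _).symm
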